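/- arXiv:2604.24898 — 2 statements merged into one kernel-verified Lean document; each statement's English description precedes it below -/
import Mathlib

section
/- Let G, Π_X, Π_Y be profinite groups (compact, Hausdorff, totally disconnected topological groups), and let π_X : Π_X → G and π_Y : Π_Y → G be continuous surjective group homomorphisms with kernels N_X = ker π_X and N_Y = ker π_Y. Assume N_Y is slim, i.e., for every open subgroup H of N_Y the centralizer of H in N_Y is trivial. Let φ̄ : N_X → N_Y be a continuous group homomorphism which is an open map, and assume that for every s ∈ Π_X there exists t ∈ Π_Y with π_Y(t) = π_X(s) such that φ̄(s·x·s⁻¹) = t·φ̄(x)·t⁻¹ for all x ∈ N_X. Then there exists a unique continuous group homomorphism φ : Π_X → Π_Y such that π_Y ∘ φ = π_X and φ(x) = φ̄(x) for all x ∈ N_X. -/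
/-- Surjectivity step (graph construction) in the proof of Proposition 2.5:
given profinite groups over `G` with `ker πY` slim, a continuous open homomorphism
`φ̄ : ker πX →* ker πY` compatible with the conjugation actions extends uniquely to
a continuous homomorphism `φ : PX →* PY` over `G`. -/
theorem extension_of_kernel_map {G PX PY : Type*}
    [Group G] [TopologicalSpace G] [IsTopologicalGroup G]
    [CompactSpace G] [T2Space G] [TotallyDisconnectedSpace G]
    [Group PX] [TopologicalSpace PX] [IsTopologicalGroup PX]
    [CompactSpace PX] [T2Space PX] [TotallyDisconnectedSpace PX]
    [Group PY] [TopologicalSpace PY] [IsTopologicalGroup PY]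
    [CompactSpace PY] [T2Space PY] [TotallyDisconnectedSpace PY]
    (piX : PX →* G) (piY : PY →* G)
    (hpiXc : Continuous piX) (hpiYc : Continuous piY)
    (hsX : Function.Surjective piX) (hsY : Function.Surjective piY)
    (hslim : ∀ H : Subgroup piY.ker, IsOpen (H : Set piY.ker) →
      ∀ c ∈ Subgroup.centralizer (H : Set piY.ker), c = 1)
    (φbar : piX.ker →* piY.ker) (hφc : Continuous φbar) (hφopen : IsOpenMap φbar)
    (hequiv : ∀ s : PX, ∃ t : PY, piY t = piX s ∧
      ∀ x : piX.ker,
        (φbar ⟨s * (x : PX) * s⁻¹,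
            (MonoidHom.normal_ker piX).conj_mem (x : PX) x.2 s⟩ : PY)
          = t * (φbar x : PY) * t⁻¹) :
    ∃! φ : PX →* PY, Continuous φ ∧ piY.comp φ = piX ∧
      ∀ x : piX.ker, φ (x : PX) = (φbar x : PY) := by
  classical
  have conj_mem : ∀ (s : PX) (x : piX.ker), s * (x : PX) * s⁻¹ ∈ piX.ker :=
    fun s x => (MonoidHom.normal_ker piX).conj_mem (x : PX) x.2 s
  set P : PX → PY → Prop := fun s t => piY t = piX s ∧ ∀ x : piX.ker,
      (φbar ⟨s * (x : PX) * s⁻¹, conj_mem s x⟩ : PY) = t * (φbar x : PY) * t⁻¹ with hPdef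
  -- uniqueness of the compatible element t
  have key : ∀ (s : PX) (t t' : PY), P s t → P s t' → t = t' := by
    rintro s t t' ⟨ht, h⟩ ⟨ht', h'⟩
    have hc : t'⁻¹ * t ∈ piY.ker := by
      rw [MonoidHom.mem_ker, map_mul, map_inv, ht, ht', inv_mul_cancel]
    have hcent : (⟨t'⁻¹ * t, hc⟩ : piY.ker) ∈
        Subgroup.centralizer (φbar.range : Set piY.ker) := by
      rw [Subgroup.mem_centralizer_iff]
      rintro g ⟨x, rfl⟩
      have ht2 : t * (φbar x : PY) * t⁻¹ = t' * (φbar x : PY) * t'⁻¹ :=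
        (h x).symm.trans (h' x)
      ext
      simp only [Subgroup.coe_mul]
      calc (φbar x : PY) * (t'⁻¹ * t)
          = t'⁻¹ * (t' * (φbar x : PY) * t'⁻¹) * t := by group
        _ = t'⁻¹ * (t * (φbar x : PY) * t⁻¹) * t := by rw [ht2]
        _ = (t'⁻¹ * t) * (φbar x : PY) := by group
    have h1 := hslim φbar.range
      (by rw [MonoidHom.coe_range]; exact hφopen.isOpen_range) _ hcent
    have h2 : t'⁻¹ * t = 1 := congrArg Subtype.val h1
    exact (inv_mul_eq_one.mp h2).symm
  have hex : ∀ s : PX, ∃ t : PY, P s t := hequiv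
  set f : PX → PY := fun s => (hex s).choose with hfdef
  have hf : ∀ s, P s (f s) := fun s => (hex s).choose_spec
  have funiq : ∀ s t, P s t → t = f s := fun s t h => key s t (f s) h (hf s)
  -- f extends φbar
  have hPker : ∀ x : piX.ker, P (x : PX) (φbar x : PY) := by
    intro x
    refine ⟨?_, ?_⟩
    · rw [MonoidHom.mem_ker.mp (φbar x).2, MonoidHom.mem_ker.mp x.2]
    · intro y
      have harg : (⟨(x : PX) * (y : PX) * (x : PX)⁻¹, conj_mem _ y⟩ : piX.ker)
          = x * y * x⁻¹ := by ext; simp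
      rw [harg, map_mul, map_mul, map_inv]
      simp
  have hfker : ∀ x : piX.ker, f (x : PX) = (φbar x : PY) :=
    fun x => (funiq _ _ (hPker x)).symm
  -- f is multiplicative
  have hmul : ∀ s s' : PX, f (s * s') = f s * f s' := by
    intro s s'
    refine (funiq (s * s') (f s * f s') ⟨?_, ?_⟩).symm
    · rw [map_mul, (hf s).1, (hf s').1, map_mul]
    · intro x
      have harg : (⟨(s * s') * (x : PX) * (s * s')⁻¹, conj_mem _ x⟩ : piX.ker)
          = ⟨s * ((⟨s' * (x : PX) * s'⁻¹, conj_mem s' x⟩ : piX.ker) : PX) * s⁻¹,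
              conj_mem s _⟩ := by
        ext; simp only; group
      rw [harg, (hf s).2 ⟨s' * (x : PX) * s'⁻¹, conj_mem s' x⟩, (hf s').2 x]
      group
  set φ : PX →* PY := MonoidHom.mk' f hmul with hφdef
  -- the graph
  set Γ : Set (PX × PY) := {p | P p.1 p.2} with hΓdef
  have hΓclosed : IsClosed Γ := by
    have hc1 : IsClosed {p : PX × PY | piY p.2 = piX p.1} :=
      isClosed_eq (hpiYc.comp continuous_snd) (hpiXc.comp continuous_fst)
    have hc2 : ∀ x : piX.ker, IsClosed {p : PX × PY |
        (φbar ⟨p.1 * (x : PX) * p.1⁻¹, conj_mem p.1 x⟩ : PY)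
          = p.2 * (φbar x : PY) * p.2⁻¹} := by
      intro x
      apply isClosed_eq
      · exact continuous_subtype_val.comp (hφc.comp
          (Continuous.subtype_mk
            ((continuous_fst.mul continuous_const).mul continuous_fst.inv) _))
      · exact (continuous_snd.mul continuous_const).mul continuous_snd.inv
    have hΓeq : Γ = {p : PX × PY | piY p.2 = piX p.1} ∩
        ⋂ x : piX.ker, {p : PX × PY |
          (φbar ⟨p.1 * (x : PX) * p.1⁻¹, conj_mem p.1 x⟩ : PY)
            = p.2 * (φbar x : PY) * p.2⁻¹} := by
      ext p
      simp only [hΓdef, hPdef, Set.mem_setOf_eq, Set.mem_inter_iff, Set.mem_iInter]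
    rw [hΓeq]
    exact hc1.inter (isClosed_iInter hc2)
  haveI : CompactSpace Γ := isCompact_iff_compactSpace.mp hΓclosed.isCompact
  have hbij : Function.Bijective (fun p : Γ => (p : PX × PY).1) := by
    constructor
    · rintro ⟨⟨s, t⟩, h⟩ ⟨⟨s', t'⟩, h'⟩ (hss : s = s')
      subst hss
      have : t = t' := key s t t' h h'
      subst this
      rfl
    · intro s
      exact ⟨⟨(s, f s), hf s⟩, rfl⟩
  let e : Γ ≃ PX := Equiv.ofBijective _ hbij
  have hecont : Continuous e := continuous_fst.comp continuous_subtype_val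
  let he : Γ ≃ₜ PX := hecont.homeoOfEquivCompactToT2
  have hfeq : f = (fun p : Γ => (p : PX × PY).2) ∘ he.symm := by
    funext s
    have h1 : ((he.symm s : PX × PY)).1 = s := he.apply_symm_apply s
    have h2 : P ((he.symm s : PX × PY)).1 ((he.symm s : PX × PY)).2 :=
      (he.symm s).2
    rw [h1] at h2
    exact (funiq s _ h2).symm
  have hfc : Continuous f := by
    rw [hfeq]
    exact (continuous_snd.comp continuous_subtype_val).comp he.symm.continuous
  refine ⟨φ, ⟨hfc, ?_, hfker⟩, ?_⟩
  · ext s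
    exact (hf s).1
  · rintro ψ ⟨hψc, hψcomp, hψker⟩
    ext s
    show ψ s = f s
    refine funiq s (ψ s) ⟨DFunLike.congr_fun hψcomp s, ?_⟩
    intro x
    calc (φbar ⟨s * (x : PX) * s⁻¹, conj_mem s x⟩ : PY)
        = ψ (s * (x : PX) * s⁻¹) := (hψker _).symm
      _ = ψ s * ψ (x : PX) * (ψ s)⁻¹ := by rw [map_mul, map_mul, map_inv]
      _ = ψ s * (φbar x : PY) * (ψ s)⁻¹ := by rw [hψker]
end

section
/- Let G, Π_X, Π_Y be profinite groups (compact, Hausdorff, totally disconnected topological groups), and let π_X : Π_X → G and π_Y : Π_Y → G be continuous surjective group homomorphisms with kernels N_X = ker π_X and N_Y = ker π_Y. Assume N_Y is slim, i.e., for every open subgroup H of N_Y the centralizer of H in N_Y is trivial. Let S₁ be the set of continuous open homomorphisms φ : Π_X → Π_Y with π_Y ∘ φ = π_X, and let S₂ be the set of continuous homomorphisms φ̄ : N_X → N_Y which are open maps and satisfy: for every s ∈ Π_X there exists t ∈ Π_Y with π_Y(t) = π_X(s) and φ̄(s·x·s⁻¹) = t·φ̄(x)·t⁻¹ for all x ∈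 N_X. Let N_Y act on S₁ and on S₂ by conjugation (u·φ = (x ↦ u·φ(x)·u⁻¹)). Then restriction to N_X induces a well-defined bijection from the set of N_Y-conjugacy classes of elements of S₁ onto the set of N_Y-conjugacy classes of elements of S₂. -/
variable {G PX PY : Type*} [Group G] [Group PX] [Group PY]
  [TopologicalSpace G] [TopologicalSpace PX] [TopologicalSpace PY]

/-- The set `S₁` of continuous open homomorphisms `PX →* PY` over `G`. -/
def OverHoms (piX : PX →* G) (piY : PY →* G) : Type _ :=
  {φ : PX →* PY // Continuous φ ∧ IsOpenMap φ ∧ piY.comp φ = piX}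

/-- The set `S₂` of continuous open homomorphisms `ker πX →* ker πY` compatible with
the conjugation actions (i.e. commuting with the outer actions of `G`). -/
def KerHoms (piX : PX →* G) (piY : PY →* G) : Type _ :=
  {ψ : piX.ker →* piY.ker // Continuous ψ ∧ IsOpenMap ψ ∧
    ∀ s : PX, ∃ t : PY, piY t = piX s ∧
      ∀ x : piX.ker,
        (ψ ⟨s * (x : PX) * s⁻¹,
            (MonoidHom.normal_ker piX).conj_mem (x : PX) x.2 s⟩ : PY)
          = t * (ψ x : PY) * t⁻¹}

/-- Conjugation of elements of `S₁` by elements of `ker πY`. -/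
def conjRel1 (piX : PX →* G) (piY : PY →* G) (φ φ' : OverHoms piX piY) : Prop :=
  ∃ u : piY.ker, ∀ s : PX, φ'.1 s = (u : PY) * φ.1 s * (u : PY)⁻¹

/-- Conjugation of elements of `S₂` by elements of `ker πY`. -/
def conjRel2 (piX : PX →* G) (piY : PY →* G) (ψ ψ' : KerHoms piX piY) : Prop :=
  ∃ u : piY.ker, ∀ x : piX.ker, ψ'.1 x = u * ψ.1 x * u⁻¹


set_option linter.unusedSectionVars false

section AuxHelpers

theorem aux_exists_openSubgroup {A : Type*} [Group A] [TopologicalSpace A] [IsTopologicalGroup A]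
    [CompactSpace A] [T2Space A] [TotallyDisconnectedSpace A] {U : Set A} (hU : IsOpen U)
    (h1 : (1:A) ∈ U) : ∃ H : Subgroup A, IsOpen (H : Set A) ∧ (H : Set A) ⊆ U := by
  obtain ⟨V, hVclopen, h1V, hVU⟩ := compact_exists_isClopen_in_isOpen hU h1
  obtain ⟨H, hH⟩ := IsTopologicalGroup.exist_openSubgroup_sub_clopen_nhds_of_one hVclopen h1V
  exact ⟨H.toSubgroup, H.isOpen, hH.trans hVU⟩

theorem aux_finiteIndex_of_isOpen {A : Type*} [Group A] [TopologicalSpace A] [ContinuousMul A]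
    [CompactSpace A] (H : Subgroup A) (h : IsOpen (H : Set A)) : H.FiniteIndex :=
  haveI : Finite (A ⧸ H) := Subgroup.quotient_finite_of_isOpen H h
  Subgroup.finiteIndex_of_finite_quotient

theorem aux_isOpenMap {A B : Type*} [Group A] [TopologicalSpace A] [IsTopologicalGroup A]
    [CompactSpace A] [T2Space A] [TotallyDisconnectedSpace A]
    [Group B] [TopologicalSpace B] [IsTopologicalGroup B] [CompactSpace B] [T2Space B]
    (f : A →* B) (hf : Continuous f) (hr : IsOpen (f.range : Set B)) : IsOpenMap f := by
  have key : ∀ H : Subgroup A, IsOpen (H : Set A) → IsOpen ((H.map f : Subgroup B) : Set B) := by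
    intro H hH
    haveI hHfi : H.FiniteIndex := aux_finiteIndex_of_isOpen H hH
    haveI hRfi : f.range.FiniteIndex := aux_finiteIndex_of_isOpen f.range hr
    haveI : (H.map f).FiniteIndex := by
      constructor
      rw [Subgroup.index_map]
      refine mul_ne_zero (fun h0 => hHfi.index_ne_zero ?_) hRfi.index_ne_zero
      exact Nat.eq_zero_of_zero_dvd (h0 ▸ Subgroup.index_dvd_of_le le_sup_left)
    have hcl : IsClosed ((H.map f : Subgroup B) : Set B) := by
      have : ((H.map f : Subgroup B) : Set B) = f '' (H : Set A) := by
        ext b; simp [Subgroup.mem_map]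
      rw [this]
      exact (((H.isClosed_of_isOpen hH).isCompact).image hf).isClosed
    exact Subgroup.isOpen_of_isClosed_of_finiteIndex _ hcl
  intro U hU
  rw [isOpen_iff_forall_mem_open]
  rintro _ ⟨u, huU, rfl⟩
  have hV : IsOpen ((fun a => u * a) ⁻¹' U) := (continuous_mul_left u).isOpen_preimage U hU
  obtain ⟨H, hHopen, hHsub⟩ := aux_exists_openSubgroup hV (by simpa using huU)
  refine ⟨(fun b => f u * b) '' ((H.map f : Subgroup B) : Set B), ?_, ?_, ?_⟩
  · rintro _ ⟨b, hb, rfl⟩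
    rcases Subgroup.mem_map.mp hb with ⟨a, haH, rfl⟩
    exact ⟨u * a, hHsub haH, by rw [map_mul]⟩
  · exact (Homeomorph.mulLeft (f u)).isOpen_image.mpr (key H hHopen)
  · exact ⟨1, Subgroup.one_mem _, by simp⟩


theorem aux_closed_subgroup_open {C B : Type*} [Group C] [TopologicalSpace C] [T2Space C]
    [Group B] [TopologicalSpace B] [IsTopologicalGroup B] [CompactSpace B] [T2Space B]
    (p : B →* C) (hpc : Continuous p)
    (K : Subgroup B) (hKc : IsClosed (K : Set B))
    (hsurj : ∀ g : C, ∃ k ∈ K, p k = g)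
    (W : Subgroup p.ker) (hW : IsOpen (W : Set p.ker))
    (hWK : ∀ w : p.ker, w ∈ W → (w : B) ∈ K) :
    IsOpen (K : Set B) := by
  have hkerc : IsClosed ((p.ker : Subgroup B) : Set B) := by
    have : ((p.ker : Subgroup B) : Set B) = p ⁻¹' {1} := by
      ext b; simp [MonoidHom.mem_ker]
    rw [this]; exact isClosed_singleton.preimage hpc
  haveI : CompactSpace p.ker := isCompact_iff_compactSpace.mp hkerc.isCompact
  set M : Subgroup p.ker := K.comap p.ker.subtype with hMdef
  have hM : IsOpen (M : Set p.ker) :=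
    Subgroup.isOpen_mono (fun w hw => hWK w hw) hW
  haveI : Finite (p.ker ⧸ M) := Subgroup.quotient_finite_of_isOpen M hM
  have hrel : ∀ a b : p.ker, QuotientGroup.leftRel M a b →
      QuotientGroup.leftRel K (a : B) (b : B) := by
    intro a b hab
    rw [QuotientGroup.leftRel_apply] at hab ⊢
    simpa [hMdef, Subgroup.mem_comap, Subgroup.mem_subgroupOf] using hab
  let F : p.ker ⧸ M → B ⧸ K := Quotient.map' Subtype.val hrel
  have hFsurj : Function.Surjective F := by
    intro q
    refine Quotient.inductionOn' q (fun b => ?_)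
    obtain ⟨k, hkK, hk⟩ := hsurj (p b)
    have hmem : b * k⁻¹ ∈ p.ker := by simp [MonoidHom.mem_ker, hk]
    refine ⟨Quotient.mk'' ⟨b * k⁻¹, hmem⟩, ?_⟩
    show Quotient.map' Subtype.val hrel _ = _
    rw [Quotient.map'_mk'']
    apply Quotient.sound'
    rw [QuotientGroup.leftRel_apply]
    have : ((⟨b * k⁻¹, hmem⟩ : p.ker) : B)⁻¹ * b = k := by group
    rw [this]; exact hkK
  haveI : Finite (B ⧸ K) := Finite.of_surjective F hFsurj
  haveI : K.FiniteIndex := Subgroup.finiteIndex_of_finite_quotient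
  exact Subgroup.isOpen_of_isClosed_of_finiteIndex K hKc

end AuxHelpers

theorem aux_restrict (piX : PX →* G) (piY : PY →* G) (φ : OverHoms piX piY) :
    ∃ ψ : KerHoms piX piY, ∀ x : piX.ker, φ.1 (x : PX) = (ψ.1 x : PY) := by
  obtain ⟨f, hfc, hfo, hfover⟩ := φ
  have hover : ∀ s : PX, piY (f s) = piX s := fun s => DFunLike.congr_fun hfover s
  have hmem : ∀ x : piX.ker, f (x : PX) ∈ piY.ker := by
    intro x
    rw [MonoidHom.mem_ker, hover]
    exact x.2
  refine ⟨⟨(f.domRestrict piX.ker).codRestrict piY.ker hmem, ?_, ?_, ?_⟩, fun x => rfl⟩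
  · exact Continuous.subtype_mk (hfc.comp continuous_subtype_val) _
  · intro U hU
    obtain ⟨V, hVopen, hVU⟩ := isOpen_induced_iff.mp hU
    have himg : (⇑((f.domRestrict piX.ker).codRestrict piY.ker hmem)) '' U
        = Subtype.val ⁻¹' (f '' V) := by
      ext y
      constructor
      · rintro ⟨x, hxU, rfl⟩
        exact ⟨(x : PX), by rw [← hVU] at hxU; exact hxU, rfl⟩
      · rintro ⟨v, hvV, hv⟩
        have hvker : v ∈ piX.ker := by
          rw [MonoidHom.mem_ker, ← hover, hv]
          exact y.2
        refine ⟨⟨v, hvker⟩, ?_, Subtype.ext hv⟩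
        rw [← hVU]; exact hvV
    rw [himg]
    exact (hfo V hVopen).preimage continuous_subtype_val
  · intro s
    refine ⟨f s, hover s, fun x => ?_⟩
    show f (s * (x : PX) * s⁻¹) = _
    rw [map_mul, map_mul, map_inv]
    rfl

theorem aux_extend
    [IsTopologicalGroup G] [CompactSpace G] [T2Space G] [TotallyDisconnectedSpace G]
    [IsTopologicalGroup PX] [CompactSpace PX] [T2Space PX] [TotallyDisconnectedSpace PX]
    [IsTopologicalGroup PY] [CompactSpace PY] [T2Space PY] [TotallyDisconnectedSpace PY]
    (piX : PX →* G) (piY : PY →* G)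
    (hpiXc : Continuous piX) (hpiYc : Continuous piY)
    (hsX : Function.Surjective piX)
    (hslim : ∀ H : Subgroup piY.ker, IsOpen (H : Set piY.ker) →
      ∀ c ∈ Subgroup.centralizer (H : Set piY.ker), c = 1)
    (ψ : KerHoms piX piY) :
    ∃ φ : OverHoms piX piY, ∀ x : piX.ker, φ.1 (x : PX) = (ψ.1 x : PY) := by
  obtain ⟨g, hgc, hgo, hgcomp⟩ := ψ
  -- the defining property
  set P : PX → PY → Prop := fun s t => piY t = piX s ∧
      ∀ x : piX.ker,
        (g ⟨s * (x : PX) * s⁻¹,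
            (MonoidHom.normal_ker piX).conj_mem (x : PX) x.2 s⟩ : PY)
          = t * (g x : PY) * t⁻¹ with hPdef
  -- range of g is open in ker piY
  have hgrange : IsOpen ((g.range : Subgroup piY.ker) : Set piY.ker) := by
    have : ((g.range : Subgroup piY.ker) : Set piY.ker) = Set.range g := by
      ext y; simp [MonoidHom.mem_range]
    rw [this]; exact hgo.isOpen_range
  -- uniqueness of t
  have huniq : ∀ s t t', P s t → P s t' → t = t' := by
    intro s t t' ⟨ht1, ht2⟩ ⟨ht1', ht2'⟩
    have hker : t'⁻¹ * t ∈ piY.ker := by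
      rw [MonoidHom.mem_ker, map_mul, map_inv, ht1, ht1']
      group
    have hc : (⟨t'⁻¹ * t, hker⟩ : piY.ker) ∈
        Subgroup.centralizer ((g.range : Subgroup piY.ker) : Set piY.ker) := by
      rw [Subgroup.mem_centralizer_iff]
      rintro y hy
      obtain ⟨x, rfl⟩ := MonoidHom.mem_range.mp hy
      have h := (ht2 x).symm.trans (ht2' x)
      apply Subtype.ext
      show ((g x : PY)) * (t'⁻¹ * t) = (t'⁻¹ * t) * (g x : PY)
      have : t * (g x : PY) * t⁻¹ = t' * (g x : PY) * t'⁻¹ := h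
      calc (g x : PY) * (t'⁻¹ * t) = t'⁻¹ * (t' * (g x : PY) * t'⁻¹) * t := by group
        _ = t'⁻¹ * (t * (g x : PY) * t⁻¹) * t := by rw [this]
        _ = (t'⁻¹ * t) * (g x : PY) := by group
    have h1 := hslim g.range hgrange _ hc
    have : t'⁻¹ * t = 1 := congrArg Subtype.val h1
    exact (inv_mul_eq_one.mp this).symm
  have hex : ∀ s : PX, ∃ t : PY, P s t := hgcomp
  set φf : PX → PY := fun s => Classical.choose (hex s) with hφfdef
  have hφf : ∀ s, P s (φf s) := fun s => Classical.choose_spec (hex s)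
  -- φf is a homomorphism
  have hone : φf 1 = 1 := by
    refine huniq 1 _ 1 (hφf 1) ⟨by simp, fun x => ?_⟩
    have e1 : (⟨1 * (x : PX) * 1⁻¹,
        (MonoidHom.normal_ker piX).conj_mem (x : PX) x.2 1⟩ : piX.ker) = x := by
      apply Subtype.ext; simp
    rw [e1]; simp
  have hmul : ∀ s₁ s₂, φf (s₁ * s₂) = φf s₁ * φf s₂ := by
    intro s₁ s₂
    refine huniq (s₁ * s₂) _ _ (hφf (s₁ * s₂)) ⟨?_, fun x => ?_⟩
    · rw [map_mul, (hφf s₁).1, (hφf s₂).1, map_mul]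
    · have e1 : (⟨s₁ * s₂ * (x : PX) * (s₁ * s₂)⁻¹,
          (MonoidHom.normal_ker piX).conj_mem (x : PX) x.2 (s₁ * s₂)⟩ : piX.ker)
          = ⟨s₁ * ((⟨s₂ * (x : PX) * s₂⁻¹,
              (MonoidHom.normal_ker piX).conj_mem (x : PX) x.2 s₂⟩ : piX.ker) : PX) * s₁⁻¹,
              (MonoidHom.normal_ker piX).conj_mem _
                ((MonoidHom.normal_ker piX).conj_mem (x : PX) x.2 s₂) s₁⟩ := by
        apply Subtype.ext; show s₁ * s₂ * (x : PX) * (s₁ * s₂)⁻¹ = _; group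
      rw [e1, (hφf s₁).2, (hφf s₂).2]
      group
  set φ : PX →* PY := { toFun := φf, map_one' := hone, map_mul' := hmul } with hφdef
  -- φ extends g
  have hext : ∀ x : piX.ker, φf (x : PX) = (g x : PY) := by
    intro x₀
    refine huniq (x₀ : PX) _ _ (hφf _) ⟨?_, fun x => ?_⟩
    · have h1 : ((g x₀ : PY)) ∈ piY.ker := (g x₀).2
      rw [MonoidHom.mem_ker] at h1
      rw [h1]
      exact (MonoidHom.mem_ker.mp x₀.2).symm
    · have e1 : (⟨(x₀ : PX) * (x : PX) * (x₀ : PX)⁻¹,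
          (MonoidHom.normal_ker piX).conj_mem (x : PX) x.2 (x₀ : PX)⟩ : piX.ker)
          = x₀ * x * x₀⁻¹ := by
        apply Subtype.ext; rfl
      rw [e1, map_mul, map_mul, map_inv]
      rfl
  -- φ is over G
  have hover : piY.comp φ = piX := by
    ext s; exact (hφf s).1
  -- continuity via the closed graph
  have hφc : Continuous φf := by
    set Γ : Set (PX × PY) := {q | P q.1 q.2} with hΓdef
    have hΓclosed : IsClosed Γ := by
      have : Γ = {q : PX × PY | piY q.2 = piX q.1} ∩
          ⋂ x : piX.ker, {q : PX × PY |
            (g ⟨q.1 * (x : PX) * q.1⁻¹,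
              (MonoidHom.normal_ker piX).conj_mem (x : PX) x.2 q.1⟩ : PY)
              = q.2 * (g x : PY) * q.2⁻¹} := by
        ext q
        simp only [hΓdef, hPdef, Set.mem_setOf_eq, Set.mem_inter_iff, Set.mem_iInter]
      rw [this]
      refine IsClosed.inter (isClosed_eq (hpiYc.comp continuous_snd)
        (hpiXc.comp continuous_fst)) (isClosed_iInter fun x => isClosed_eq ?_ ?_)
      · refine continuous_subtype_val.comp (hgc.comp ?_)
        refine Continuous.subtype_mk ?_ _
        exact (continuous_fst.mul continuous_const).mul continuous_fst.inv
      · exact (continuous_snd.mul continuous_const).mul continuous_snd.inv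
    haveI : CompactSpace Γ := isCompact_iff_compactSpace.mp (hΓclosed.isCompact)
    let e : Γ ≃ PX :=
      { toFun := fun q => (q : PX × PY).1
        invFun := fun s => ⟨(s, φf s), hφf s⟩
        left_inv := by
          rintro ⟨⟨s, t⟩, hq⟩
          apply Subtype.ext
          have : φf s = t := huniq s _ t (hφf s) hq
          simp [this]
        right_inv := fun s => rfl }
    have hec : Continuous e := continuous_fst.comp continuous_subtype_val
    have h2 : Continuous fun s =>
        ((((Continuous.homeoOfEquivCompactToT2 (f := e) hec).symm s : Γ) : PX × PY)).2 :=
      continuous_snd.comp (continuous_subtype_val.comp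
        (Continuous.homeoOfEquivCompactToT2 (f := e) hec).symm.continuous)
    exact h2
  -- range of φ is open
  have hrange : IsOpen ((φ.range : Subgroup PY) : Set PY) := by
    refine aux_closed_subgroup_open piY hpiYc φ.range ?_ ?_ g.range hgrange ?_
    · have : ((φ.range : Subgroup PY) : Set PY) = Set.range φf := by
        ext y; simp [MonoidHom.mem_range]; rfl
      rw [this]
      exact (isCompact_range hφc).isClosed
    · intro c
      obtain ⟨s, rfl⟩ := hsX c
      exact ⟨φf s, ⟨s, rfl⟩, (hφf s).1⟩
    · rintro w hw
      obtain ⟨x, rfl⟩ := MonoidHom.mem_range.mp hw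
      exact ⟨(x : PX), (hext x).symm ▸ rfl⟩
  exact ⟨⟨φ, hφc, aux_isOpenMap φ hφc hrange, hover⟩, fun x => hext x⟩


set_option maxHeartbeats 1000000 in
/-- Proposition 2.5 (group-theoretic content): if `ker πY` is slim, restriction to the
kernels induces a well-defined bijection from `ker πY`-conjugacy classes of continuous
open homomorphisms `PX →* PY` over `G` to `ker πY`-conjugacy classes of continuous open
homomorphisms `ker πX →* ker πY` commuting with the outer `G`-actions. -/
theorem restriction_bijection_on_conjugacy_classes
    [IsTopologicalGroup G] [CompactSpace G] [T2Space G] [TotallyDisconnectedSpace G]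
    [IsTopologicalGroup PX] [CompactSpace PX] [T2Space PX] [TotallyDisconnectedSpace PX]
    [IsTopologicalGroup PY] [CompactSpace PY] [T2Space PY] [TotallyDisconnectedSpace PY]
    (piX : PX →* G) (piY : PY →* G)
    (hpiXc : Continuous piX) (hpiYc : Continuous piY)
    (hsX : Function.Surjective piX) (hsY : Function.Surjective piY)
    (hslim : ∀ H : Subgroup piY.ker, IsOpen (H : Set piY.ker) →
      ∀ c ∈ Subgroup.centralizer (H : Set piY.ker), c = 1) :
    (∀ φ : OverHoms piX piY, ∃ ψ : KerHoms piX piY,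
        ∀ x : piX.ker, φ.1 (x : PX) = (ψ.1 x : PY)) ∧
    ∃ F : Quot (conjRel1 piX piY) ≃ Quot (conjRel2 piX piY),
      ∀ (φ : OverHoms piX piY) (ψ : KerHoms piX piY),
        (∀ x : piX.ker, φ.1 (x : PX) = (ψ.1 x : PY)) →
          F (Quot.mk _ φ) = Quot.mk _ ψ := by

  -- the `ker πY`-conjugate of an element of `OverHoms`
  have hconjOver : ∀ (φ : OverHoms piX piY) (u : piY.ker), ∃ φ'' : OverHoms piX piY,
      ∀ s : PX, φ''.1 s = (u : PY) * φ.1 s * (u : PY)⁻¹ := by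
    intro φ u
    refine ⟨⟨(MulAut.conj ((u : PY))).toMonoidHom.comp φ.1, ?_, ?_, ?_⟩, fun s => rfl⟩
    · exact (continuous_const.mul φ.2.1).mul continuous_const
    · show IsOpenMap fun s => (u : PY) * φ.1 s * (u : PY)⁻¹
      exact ((Homeomorph.mulRight ((u : PY))⁻¹).isOpenMap.comp
        (Homeomorph.mulLeft ((u : PY))).isOpenMap).comp φ.2.2.1
    · ext s
      show piY ((u : PY) * φ.1 s * (u : PY)⁻¹) = piX s
      have hu : piY (u : PY) = 1 := MonoidHom.mem_ker.mp u.2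
      have hov : piY (φ.1 s) = piX s := DFunLike.congr_fun φ.2.2.2 s
      rw [map_mul, map_mul, map_inv, hu, hov]
      group
  -- injectivity on the nose: two over-homs agreeing on the kernel are equal
  have hinj : ∀ φ φ' : OverHoms piX piY,
      (∀ x : piX.ker, φ.1 (x : PX) = φ'.1 (x : PX)) → φ.1 = φ'.1 := by
    intro φ φ' hagree
    obtain ⟨ψφ, hψφ⟩ := aux_restrict piX piY φ
    have hro : IsOpen ((ψφ.1.range : Subgroup piY.ker) : Set piY.ker) := by
      have h0 : ((ψφ.1.range : Subgroup piY.ker) : Set piY.ker) = Set.range ψφ.1 :=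
        MonoidHom.coe_range _
      rw [h0]; exact ψφ.2.2.1.isOpen_range
    ext s
    have hker : (φ.1 s)⁻¹ * φ'.1 s ∈ piY.ker := by
      have hov : piY (φ.1 s) = piX s := DFunLike.congr_fun φ.2.2.2 s
      have hov' : piY (φ'.1 s) = piX s := DFunLike.congr_fun φ'.2.2.2 s
      rw [MonoidHom.mem_ker, map_mul, map_inv, hov, hov']
      group
    have hc : (⟨(φ.1 s)⁻¹ * φ'.1 s, hker⟩ : piY.ker) ∈
        Subgroup.centralizer ((ψφ.1.range : Subgroup piY.ker) : Set piY.ker) := by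
      rw [Subgroup.mem_centralizer_iff]
      rintro y hy
      obtain ⟨x, rfl⟩ := MonoidHom.mem_range.mp hy
      apply Subtype.ext
      show (ψφ.1 x : PY) * ((φ.1 s)⁻¹ * φ'.1 s) = ((φ.1 s)⁻¹ * φ'.1 s) * (ψφ.1 x : PY)
      rw [← hψφ x]
      have hx' : s * (x : PX) * s⁻¹ ∈ piX.ker :=
        (MonoidHom.normal_ker piX).conj_mem _ x.2 s
      have hA : φ'.1 (s * (x : PX) * s⁻¹) = φ.1 (s * (x : PX) * s⁻¹) :=
        (hagree ⟨_, hx'⟩).symm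
      rw [map_mul, map_mul, map_mul, map_mul, map_inv, map_inv, hagree x] at hA
      -- hA : φ'.1 s * φ'.1 x * (φ'.1 s)⁻¹ = φ.1 s * φ'.1 x * (φ.1 s)⁻¹
      rw [hagree x]
      calc φ'.1 (x : PX) * ((φ.1 s)⁻¹ * φ'.1 s)
          = (φ.1 s)⁻¹ * (φ.1 s * φ'.1 (x : PX) * (φ.1 s)⁻¹) * φ'.1 s := by group
        _ = (φ.1 s)⁻¹ * (φ'.1 s * φ'.1 (x : PX) * (φ'.1 s)⁻¹) * φ'.1 s := by rw [hA]
        _ = ((φ.1 s)⁻¹ * φ'.1 s) * φ'.1 (x : PX) := by group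
    have h1 := hslim ψφ.1.range hro _ hc
    have h2 : (φ.1 s)⁻¹ * φ'.1 s = 1 := congrArg Subtype.val h1
    exact (inv_mul_eq_one.mp h2)
  -- the restriction map
  have hR : ∀ φ : OverHoms piX piY, ∃ ψ : KerHoms piX piY,
      ∀ x : piX.ker, φ.1 (x : PX) = (ψ.1 x : PY) := fun φ => aux_restrict piX piY φ
  refine ⟨hR, ?_⟩
  set R : OverHoms piX piY → KerHoms piX piY := fun φ => Classical.choose (hR φ) with hRdef
  have hRspec : ∀ (φ : OverHoms piX piY) (x : piX.ker),
      φ.1 (x : PX) = ((R φ).1 x : PY) := fun φ => Classical.choose_spec (hR φ)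
  -- extensionality for KerHoms
  have kext : ∀ ψ ψ' : KerHoms piX piY,
      (∀ x : piX.ker, (ψ.1 x : PY) = (ψ'.1 x : PY)) → ψ = ψ' := by
    intro ψ ψ' h
    exact Subtype.ext (MonoidHom.ext fun x => Subtype.ext (h x))
  -- conjRel2 is an equivalence relation
  have hequiv2 : Equivalence (conjRel2 piX piY) := by
    constructor
    · intro ψ; exact ⟨1, fun x => by group⟩
    · rintro ψ ψ' ⟨u, hu⟩
      exact ⟨u⁻¹, fun x => by rw [hu x]; group⟩
    · rintro ψ ψ' ψ'' ⟨u, hu⟩ ⟨v, hv⟩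
      exact ⟨v * u, fun x => by rw [hv x, hu x]; group⟩
  -- the restriction map descends to conjugacy classes
  have hsound : ∀ φ φ' : OverHoms piX piY, conjRel1 piX piY φ φ' →
      conjRel2 piX piY (R φ) (R φ') := by
    rintro φ φ' ⟨u, hu⟩
    refine ⟨u, fun x => ?_⟩
    apply Subtype.ext
    show ((R φ').1 x : PY) = ((u * (R φ).1 x * u⁻¹ : piY.ker) : PY)
    push_cast
    rw [← hRspec φ' x, ← hRspec φ x, hu (x : PX)]
  set Fq : Quot (conjRel1 piX piY) → Quot (conjRel2 piX piY) :=
    Quot.map R hsound with hFqdef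
  have hFq : ∀ φ : OverHoms piX piY, Fq (Quot.mk _ φ) = Quot.mk _ (R φ) := fun φ => rfl
  have hbij : Function.Bijective Fq := by
    constructor
    · -- injective
      intro a b
      refine Quot.induction_on₂ a b (fun φ φ' h => ?_)
      rw [hFq, hFq] at h
      obtain ⟨u, hu⟩ := hequiv2.eqvGen_iff.mp (Quot.eqvGen_exact h)
      obtain ⟨φ'', hφ''⟩ := hconjOver φ u
      have hagree : ∀ x : piX.ker, φ''.1 (x : PX) = φ'.1 (x : PX) := by
        intro x
        rw [hφ'' (x : PX), hRspec φ x, hRspec φ' x, hu x]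
        push_cast
        ring_nf
      have : φ'' = φ' := Subtype.ext (hinj φ'' φ' hagree)
      rw [← this]
      exact Quot.sound ⟨u, hφ''⟩
    · -- surjective
      intro b
      refine Quot.induction_on b (fun ψ => ?_)
      obtain ⟨φ, hφ⟩ := aux_extend piX piY hpiXc hpiYc hsX hslim ψ
      refine ⟨Quot.mk _ φ, ?_⟩
      rw [hFq]
      congr 1
      exact kext (R φ) ψ (fun x => by rw [← hRspec φ x, hφ x])
  refine ⟨Equiv.ofBijective Fq hbij, ?_⟩
  intro φ ψ h
  show Fq (Quot.mk _ φ) = Quot.mk _ ψ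
  rw [hFq]
  congr 1
  exact kext (R φ) ψ (fun x => by rw [← hRspec φ x, h x])
end
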